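/- Let L₁, L₂ be real symmetric positive semidefinite N×N matrices (graph Laplacians), g a spectral filter, P a permutation matrix, and write G₁ = g(L₁), G₂ = g(L₂). Define W²(P) = Tr(G₁²) + Tr(P G₂² Pᵀ) − 2 Tr(√(G₁ P G₂² Pᵀ G₁)) and W̃²(P) = Tr(G₁²) + Tr(G₂²) − 2 Tr(G₁ P G₂ Pᵀ). Then W²(P) ≤ W̃²(P). -/

import Mathlib

open Matrix

/-- The spectral application of `g : ℝ → ℝ` to a symmetric real matrix `L`. -/
noncomputable def specApply {N : ℕ} (g : ℝ → ℝ) {L : Matrix (Fin N) (Fin N) ℝ}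
    (hL : L.IsHermitian) : Matrix (Fin N) (Fin N) ℝ :=
  (hL.eigenvectorUnitary : Matrix (Fin N) (Fin N) ℝ) * Matrix.diagonal (g ∘ hL.eigenvalues) *
    star (hL.eigenvectorUnitary : Matrix (Fin N) (Fin N) ℝ)

/-- The positive semidefinite square root of a positive semidefinite matrix (the definition
`Matrix.PosSemidef.sqrt` of the older Mathlib, which has since been removed). -/
noncomputable def Matrix.PosSemidef.sqrt {n 𝕜 : Type*} [Fintype n] [DecidableEq n] [RCLike 𝕜] [PartialOrder 𝕜] [StarOrderedRing 𝕜]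
    {A : Matrix n n 𝕜} (hA : A.PosSemidef) : Matrix n n 𝕜 :=
  (hA.1.eigenvectorUnitary : Matrix n n 𝕜) * diagonal ((↑) ∘ (√·) ∘ hA.1.eigenvalues) *
    (star hA.1.eigenvectorUnitary : Matrix n n 𝕜)

lemma psd_sqrt_aux {n : ℕ} {M : Matrix (Fin n) (Fin n) ℝ} (hM : M.PosSemidef) :
    hM.sqrt.PosSemidef := by
  unfold Matrix.PosSemidef.sqrt
  have hD : (diagonal ((↑) ∘ (√·) ∘ hM.1.eigenvalues) : Matrix (Fin n) (Fin n) ℝ).PosSemidef :=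
    PosSemidef.diagonal (fun i => by simp [Real.sqrt_nonneg])
  rw [Matrix.star_eq_conjTranspose]
  exact hD.mul_mul_conjTranspose_same _

lemma sqrt_mul_self_aux {n : ℕ} {M : Matrix (Fin n) (Fin n) ℝ} (hM : M.PosSemidef) :
    hM.sqrt * hM.sqrt = M := by
  unfold Matrix.PosSemidef.sqrt
  have hU : star (hM.1.eigenvectorUnitary : Matrix (Fin n) (Fin n) ℝ) * (hM.1.eigenvectorUnitary : Matrix (Fin n) (Fin n) ℝ) = 1 :=
    (Matrix.mem_unitaryGroup_iff').mp hM.1.eigenvectorUnitary.2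
  conv_rhs => rw [hM.1.spectral_theorem, Unitary.conjStarAlgAut_apply]
  rw [show ∀ A B C D E F : Matrix (Fin n) (Fin n) ℝ, A * B * C * (D * E * F) = A * B * (C * D) * E * F by
    intros; simp only [Matrix.mul_assoc]]
  rw [hU, Matrix.mul_one, Matrix.mul_assoc _ (diagonal _) (diagonal _), diagonal_mul_diagonal]
  congr 3 with i
  simp [Real.mul_self_sqrt (hM.eigenvalues_nonneg i)]

lemma specApply_isHermitian {N : ℕ} (g : ℝ → ℝ) {L : Matrix (Fin N) (Fin N) ℝ}
    (hL : L.IsHermitian) : (specApply g hL).IsHermitian := by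
  unfold specApply Matrix.IsHermitian
  simp [conjTranspose_mul, Matrix.star_eq_conjTranspose, diagonal_conjTranspose,
    Matrix.mul_assoc]

lemma permMatrix_transpose_mul {N : ℕ} (σ : Equiv.Perm (Fin N)) :
    (σ.permMatrix ℝ)ᵀ * σ.permMatrix ℝ = 1 := by
  show (σ.toPEquiv.toMatrix)ᵀ * σ.toPEquiv.toMatrix = (1 : Matrix (Fin N) (Fin N) ℝ)
  rw [← PEquiv.toMatrix_symm, ← PEquiv.toMatrix_trans, ← Equiv.toPEquiv_symm,
    ← Equiv.toPEquiv_trans]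
  simp

/-- Key inequality: for any `C` with `C * Cᴴ = M` PSD, `Tr C ≤ Tr √M`. -/
lemma trace_le_trace_sqrt {n : ℕ} (C : Matrix (Fin n) (Fin n) ℝ)
    {M : Matrix (Fin n) (Fin n) ℝ} (hM : M.PosSemidef) (h : C * Cᴴ = M) :
    C.trace ≤ hM.sqrt.trace := by
  set S := hM.sqrt with hSdef
  have hS : S.PosSemidef := psd_sqrt_aux hM
  have hSS : S * S = M := sqrt_mul_self_aux hM
  set U : Matrix (Fin n) (Fin n) ℝ := (hS.1.eigenvectorUnitary : Matrix (Fin n) (Fin n) ℝ) with hUdef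
  have hU1 : star U * U = 1 := (Matrix.mem_unitaryGroup_iff').mp hS.1.eigenvectorUnitary.2
  have hU2 : U * star U = 1 := (Matrix.mem_unitaryGroup_iff).mp hS.1.eigenvectorUnitary.2
  set e := hS.1.eigenvalues with hedef
  have he : ∀ i, 0 ≤ e i := hS.eigenvalues_nonneg
  have hdiag : star U * S * U = diagonal e := by
    have := hS.1.conjStarAlgAut_star_eigenvectorUnitary
    simpa using this
  have htrS : S.trace = ∑ i, e i := by
    have : (star U * S * U).trace = S.trace := by
      rw [trace_mul_cycle, hU2, Matrix.one_mul]
    rw [← this, hdiag, trace_diagonal]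
  set E : Matrix (Fin n) (Fin n) ℝ := star U * C with hEdef
  have hEE : E * Eᴴ = diagonal (fun i => e i ^ 2) := by
    have key : E * Eᴴ = star U * M * U := by
      have hE' : Eᴴ = Cᴴ * U := by
        rw [hEdef]
        simp [conjTranspose_mul, Matrix.star_eq_conjTranspose,
          conjTranspose_eq_transpose_of_trivial]
      rw [hE', hEdef, ← h]; simp only [Matrix.mul_assoc]
    rw [key, ← hSS]
    calc star U * (S * S) * U = (star U * S * U) * (star U * S * U) := by
          simp only [Matrix.mul_assoc]
          rw [← Matrix.mul_assoc U (star U), hU2, Matrix.one_mul]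
      _ = diagonal (fun i => e i ^ 2) := by
          rw [hdiag, diagonal_mul_diagonal]
          congr 1 with i; ring
  have htrC : C.trace = (E * U).trace := by
    rw [hEdef, Matrix.mul_assoc, trace_mul_comm, Matrix.mul_assoc, hU2, Matrix.mul_one]
  rw [htrC, htrS, trace]
  apply Finset.sum_le_sum
  intro i _
  have h1 : ∑ j, E i j ^ 2 = e i ^ 2 := by
    have := congrFun (congrFun hEE i) i
    simpa [Matrix.mul_apply, conjTranspose_apply, pow_two] using this
  have h2 : ∑ j, U j i ^ 2 = 1 := by
    have := congrFun (congrFun hU1 i) i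
    simpa [Matrix.mul_apply, conjTranspose_apply, pow_two, one_apply] using this
  have hcs := Finset.sum_mul_sq_le_sq_mul_sq Finset.univ (fun j => E i j) (fun j => U j i)
  rw [h1, h2, mul_one] at hcs
  have hd : (E * U).diag i = ∑ j, E i j * U j i := by simp [Matrix.diag, Matrix.mul_apply]
  rw [hd]
  nlinarith [he i]

/-- With `G₁ = g(L₁)`, `G₂ = g(L₂)` for a nonnegative spectral filter `g` and PSD Laplacians
`L₁`, `L₂`, and `P` a permutation matrix, the Gaussian squared 2-Wasserstein cost
`W²(P) = Tr(G₁²) + Tr(P G₂² Pᵀ) − 2 Tr(√(G₁ P G₂² Pᵀ G₁))` is bounded above by the surrogate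
`W̃²(P) = Tr(G₁²) + Tr(G₂²) − 2 Tr(G₁ P G₂ Pᵀ)`. -/
theorem stmt_7 {N : ℕ} (g : ℝ → ℝ) (hg : ∀ x, 0 ≤ g x)
    (L₁ L₂ : Matrix (Fin N) (Fin N) ℝ) (hL₁ : L₁.PosSemidef) (hL₂ : L₂.PosSemidef)
    (σ : Equiv.Perm (Fin N))
    (G₁ G₂ : Matrix (Fin N) (Fin N) ℝ)
    (hG₁ : G₁ = specApply g hL₁.isHermitian) (hG₂ : G₂ = specApply g hL₂.isHermitian)
    (hM : (G₁ * σ.permMatrix ℝ * (G₂ * G₂) * (σ.permMatrix ℝ)ᵀ * G₁).PosSemidef) :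
    (G₁ * G₁).trace + (σ.permMatrix ℝ * (G₂ * G₂) * (σ.permMatrix ℝ)ᵀ).trace
        - 2 * hM.sqrt.trace
      ≤ (G₁ * G₁).trace + (G₂ * G₂).trace
        - 2 * (G₁ * σ.permMatrix ℝ * G₂ * (σ.permMatrix ℝ)ᵀ).trace := by
  set P : Matrix (Fin N) (Fin N) ℝ := σ.permMatrix ℝ with hP
  have hPt : Pᵀ * P = 1 := permMatrix_transpose_mul σ
  have hG₁H : G₁.IsHermitian := hG₁ ▸ specApply_isHermitian g hL₁.isHermitian
  have hG₂H : G₂.IsHermitian := hG₂ ▸ specApply_isHermitian g hL₂.isHermitian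
  have htr2 : (P * (G₂ * G₂) * Pᵀ).trace = (G₂ * G₂).trace := by
    rw [trace_mul_cycle, hPt, Matrix.one_mul]
  have cancel : ∀ X : Matrix (Fin N) (Fin N) ℝ, Pᵀ * (P * X) = X := fun X => by
    rw [← Matrix.mul_assoc, hPt, Matrix.one_mul]
  have hCC : (G₁ * P * G₂ * Pᵀ) * (G₁ * P * G₂ * Pᵀ)ᴴ
      = G₁ * P * (G₂ * G₂) * Pᵀ * G₁ := by
    have hG₁T : G₁ᵀ = G₁ := by
      rw [← conjTranspose_eq_transpose_of_trivial]; exact hG₁H.eq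
    have hG₂T : G₂ᵀ = G₂ := by
      rw [← conjTranspose_eq_transpose_of_trivial]; exact hG₂H.eq
    have h1 : (G₁ * P * G₂ * Pᵀ)ᴴ = P * G₂ * Pᵀ * G₁ := by
      rw [conjTranspose_eq_transpose_of_trivial]
      simp [transpose_mul, hG₁T, hG₂T, Matrix.mul_assoc]
    rw [h1]
    simp only [Matrix.mul_assoc, cancel]
  have hkey : (G₁ * P * G₂ * Pᵀ).trace ≤ hM.sqrt.trace :=
    trace_le_trace_sqrt _ hM hCC
  linarith
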